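/- Let λ ≠ 0 be a complex constant. A formal binomial series Y(z) = Σ aₙ z^{\underline{n}} satisfies the recurrence coming from the difference equation Δy = λy, namely (n+1)a_{n+1} = λ aₙ for all n ≥ 0, if and only if aₙ = a₀ λⁿ/n!. Moreover, for |λ| ≤ 1, λ ≠ -1, the resulting series Σ_{n=0}^∞ (λⁿ/n!) z^{\underline{n}} converges to (1+λ)^z on the right half plane Re z > 0. -/

import Mathlib

/-- Falling factorial. -/
noncomputable def ff (z : ℂ) : ℕ → ℂ
  | 0 => 1
  | n + 1 => ff z n * (z - n)

open Filter Topology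



lemma slit_of_ball {w : ℂ} (hw : ‖w‖ < 1) : 1 + w ∈ Complex.slitPlane := by
  rw [Complex.mem_slitPlane_iff]
  left
  have : |w.re| < 1 := lt_of_le_of_lt (Complex.abs_re_le_norm w) hw
  simp only [Complex.add_re, Complex.one_re]
  cases abs_lt.mp this; linarith

lemma iter_deriv (z : ℂ) (n : ℕ) :
    ∀ w ∈ Metric.ball (0:ℂ) 1, iteratedDeriv n (fun w => (1 + w) ^ z) w
      = ff z n * (1 + w) ^ (z - n) := by
  induction n with
  | zero => intro w hw; simp [ff]
  | succ n ih =>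
    intro w hw
    rw [iteratedDeriv_succ]
    have hev : iteratedDeriv n (fun w => (1 + w) ^ z) =ᶠ[𝓝 w]
        (fun w => ff z n * (1 + w) ^ (z - n)) := by
      filter_upwards [Metric.isOpen_ball.mem_nhds hw] with x hx using ih x hx
    rw [hev.deriv_eq]
    have hslit : (1 + w) ∈ Complex.slitPlane :=
      slit_of_ball (by simpa using hw)
    have hder : HasDerivAt (fun w : ℂ => ff z n * (1 + w) ^ (z - n))
        (ff z n * ((z - n) * (1 + w) ^ (z - n - 1) * 1)) w :=
      (((hasDerivAt_id w).const_add 1).cpow_const hslit).const_mul _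
    rw [hder.deriv]
    simp only [ff, mul_one]
    push_cast
    rw [show z - (↑n + 1) = z - ↑n - 1 by ring]
    ring

lemma hasSum_ball (z l : ℂ) (hl : ‖l‖ < 1) :
    HasSum (fun n : ℕ => l ^ n / (n.factorial : ℂ) * ff z n) ((1 + l) ^ z) := by
  have hdiff : DifferentiableOn ℂ (fun w : ℂ => (1 + w) ^ z) (Metric.ball 0 1) := by
    intro w hw
    have hslit : (1 + w) ∈ Complex.slitPlane :=
      slit_of_ball (by simpa using hw)
    exact (((hasDerivAt_id w).const_add 1).cpow_const
      hslit).differentiableAt.differentiableWithinAt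
  have hl' : l ∈ Metric.ball (0:ℂ) 1 := by simpa using hl
  have H := Complex.hasSum_taylorSeries_on_ball hdiff hl'
  convert H using 2 with n
  · rfl
  rw [iter_deriv z n 0 (by simp), sub_zero]
  rw [show (1:ℂ) + 0 = 1 by ring, Complex.one_cpow]
  simp only [smul_eq_mul, mul_one]
  ring



lemma summ (z : ℂ) (hz : 0 < z.re) :
    Summable (fun n : ℕ => ‖ff z n‖ / n.factorial) := by
  set σ : ℝ := z.re with hσ
  set s : ℝ := 1 + σ / 2 with hsdef
  have hs1 : 1 < s := by simp [hsdef]; linarith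
  set N : ℕ := ⌈(σ ^ 2 + z.im ^ 2) / σ⌉₊ + 1 with hN
  set d : ℕ → ℝ := fun n => ‖ff z n‖ * (n : ℝ) ^ s / n.factorial with hd
  -- key one-step inequality
  have key : ∀ n, N ≤ n → d (n + 1) ≤ d n := by
    intro n hn
    have hn1 : (1 : ℝ) ≤ n := by
      have : 1 ≤ n := le_trans (by simp [hN]) hn
      exact_mod_cast this
    have hσn : σ ^ 2 + z.im ^ 2 ≤ σ * n := by
      have h1 : (σ ^ 2 + z.im ^ 2) / σ ≤ (N : ℝ) := by
        have := Nat.le_ceil ((σ ^ 2 + z.im ^ 2) / σ)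
        have h2 : ((⌈(σ ^ 2 + z.im ^ 2) / σ⌉₊ : ℝ)) ≤ (N : ℝ) := by
          exact_mod_cast Nat.le_succ _
        linarith
      have hNn : (N : ℝ) ≤ (n : ℝ) := by exact_mod_cast hn
      rw [div_le_iff₀ hz] at h1
      calc σ ^ 2 + z.im ^ 2 ≤ (N:ℝ) * σ := h1
        _ ≤ (n:ℝ) * σ := by nlinarith
        _ = σ * n := by ring
    have hσn' : σ ≤ n := by nlinarith [sq_nonneg z.im]
    set t : ℝ := (n : ℝ) with ht
    set u : ℝ := t + 1 with hu
    have hupos : 0 < u := by simp only [hu]; linarith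
    have htpos : 0 < t := by linarith
    -- Step A : ‖z - n‖ ≤ u - s
    have hA : ‖z - (n : ℂ)‖ ≤ u - s := by
      have husnn : 0 ≤ u - s := by
        simp only [hu, hsdef]
        linarith
      have hsq : ‖z - (n : ℂ)‖ ^ 2 ≤ (u - s) ^ 2 := by
        have hnorm : ‖z - (n : ℂ)‖ ^ 2 = (σ - t) ^ 2 + z.im ^ 2 := by
          rw [Complex.sq_norm, Complex.normSq_apply]
          simp only [Complex.sub_re, Complex.sub_im, Complex.natCast_re,
            Complex.natCast_im, sub_zero, ← hσ, ← ht]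
          ring
        rw [hnorm]
        have huse : u - s = t - σ / 2 := by rw [hu, hsdef]; ring
        rw [huse]
        nlinarith
      calc ‖z - (n : ℂ)‖ = √(‖z - (n : ℂ)‖ ^ 2) := by
            rw [Real.sqrt_sq (norm_nonneg _)]
        _ ≤ √((u - s) ^ 2) := Real.sqrt_le_sqrt hsq
        _ = u - s := Real.sqrt_sq husnn
    -- Step B : (u - s) * u ^ s ≤ u * t ^ s  (rpow)
    have hB : (u - s) * u ^ s ≤ u * t ^ s := by
      have hbern : 1 + s * (-1 / u) ≤ (1 + (-1 / u)) ^ s := by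
        apply one_add_mul_self_le_rpow_one_add _ hs1.le
        rw [neg_div]
        have : 1 / u ≤ 1 := by
          rw [div_le_one hupos]; linarith
        linarith
      have h1u : (1 : ℝ) + (-1 / u) = t / u := by
        field_simp
        rw [hu]; ring
      rw [h1u] at hbern
      have hmul := mul_le_mul_of_nonneg_left hbern
        (le_of_lt (mul_pos hupos (Real.rpow_pos_of_pos hupos s)))
      have hL : u * u ^ s * (1 + s * (-1 / u)) = (u - s) * u ^ s + (s * u ^ s - s * u ^ s) := by
        field_simp
        ring
      have hR : u * u ^ s * (t / u) ^ s = u * t ^ s := by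
        rw [mul_assoc, ← Real.mul_rpow (le_of_lt hupos) (le_of_lt (div_pos htpos hupos)),
          mul_div_cancel₀ _ (ne_of_gt hupos)]
      calc (u - s) * u ^ s = u * u ^ s * (1 + s * (-1 / u)) := by
            field_simp; ring
        _ ≤ u * u ^ s * (t / u) ^ s := hmul
        _ = u * t ^ s := hR
    -- combine
    have hC : ‖z - (n : ℂ)‖ * u ^ s ≤ u * t ^ s := by
      calc ‖z - (n : ℂ)‖ * u ^ s ≤ (u - s) * u ^ s := by
            apply mul_le_mul_of_nonneg_right hA (Real.rpow_pos_of_pos hupos s).le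
        _ ≤ u * t ^ s := hB
    have hffsucc : ‖ff z (n + 1)‖ = ‖ff z n‖ * ‖z - (n : ℂ)‖ := by
      simp [ff, norm_mul]
    have hfact : ((n + 1).factorial : ℝ) = u * n.factorial := by
      rw [Nat.factorial_succ]
      push_cast
      rw [hu, ht]
    have hfactpos : (0 : ℝ) < n.factorial := by positivity
    simp only [hd]
    rw [hffsucc, hfact]
    have hcastu : ((n + 1 : ℕ) : ℝ) = u := by rw [hu, ht]; push_cast; ring
    rw [hcastu]
    rw [div_le_div_iff₀ (by positivity) hfactpos]
    have := mul_le_mul_of_nonneg_left hC (mul_nonneg (norm_nonneg (ff z n)) hfactpos.le)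
    calc ‖ff z n‖ * ‖z - (n:ℂ)‖ * u ^ s * ↑n.factorial
        = (‖ff z n‖ * ↑n.factorial) * (‖z - (n:ℂ)‖ * u ^ s) := by ring
      _ ≤ (‖ff z n‖ * ↑n.factorial) * (u * t ^ s) := this
      _ = ‖ff z n‖ * t ^ s * (u * ↑n.factorial) := by ring
  -- monotone from N
  have hmono : ∀ n, N ≤ n → d n ≤ d N := by
    intro n hn
    induction n, hn using Nat.le_induction with
    | base => exact le_refl _ --
    | succ n hn ih => exact le_trans (key n hn) ih
  -- summability
  have hsummable : Summable (fun n : ℕ => (n : ℝ) ^ (-s)) :=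
    Real.summable_nat_rpow.mpr (by linarith)
  apply summable_of_isBigO_nat hsummable
  rw [Asymptotics.isBigO_iff]
  refine ⟨d N, ?_⟩
  filter_upwards [eventually_ge_atTop N] with n hn
  have hn1 : (1 : ℝ) ≤ n := by
    have : 1 ≤ n := le_trans (by simp [hN]) hn
    exact_mod_cast this
  have hnpos : (0:ℝ) < n := by linarith
  have hpows : (0:ℝ) < (n:ℝ) ^ s := Real.rpow_pos_of_pos hnpos s
  rw [Real.norm_eq_abs, Real.norm_eq_abs, abs_of_nonneg (by positivity),
    abs_of_nonneg (Real.rpow_nonneg hnpos.le _), Real.rpow_neg hnpos.le]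
  have hdn := hmono n hn
  have : ‖ff z n‖ / ↑n.factorial = d n * ((n:ℝ) ^ s)⁻¹ := by
    simp only [hd]
    field_simp
  rw [this]
  apply mul_le_mul_of_nonneg_right hdn (by positivity)




lemma hasSum_main (l : ℂ) (hl1 : ‖l‖ ≤ 1) (hlm : l ≠ -1) (z : ℂ) (hz : 0 < z.re) :
    HasSum (fun n : ℕ => l ^ n / (n.factorial : ℂ) * ff z n) ((1 + l) ^ z) := by
  rcases lt_or_eq_of_le hl1 with h | h
  · exact hasSum_ball z l h
  · -- ‖l‖ = 1
    have habs : |l.re| ≤ 1 := le_trans (Complex.abs_re_le_norm l) (le_of_eq h)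
    have hrene : l.re ≠ -1 := by
      intro hre
      apply hlm
      have hsq : l.re * l.re + l.im * l.im = 1 := by
        have h2 : Complex.normSq l = ‖l‖ ^ 2 := (Complex.sq_norm l).symm
        rw [Complex.normSq_apply] at h2
        rw [h] at h2
        simpa using h2
      have him : l.im = 0 := by nlinarith
      apply Complex.ext <;> simp [hre, him]
    have hre : 0 < (1 + l).re := by
      simp only [Complex.add_re, Complex.one_re]
      rcases abs_le.mp habs with ⟨h1, _⟩
      rcases lt_or_eq_of_le h1 with h1 | h1
      · linarith
      · exact absurd h1.symm hrene
    set g : ℕ → ℂ := fun n => l ^ n / (n.factorial : ℂ) * ff z n with hg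
    have hbsum := summ z hz
    have hgnorm : ∀ n, ‖g n‖ = ‖ff z n‖ / n.factorial := by
      intro n
      simp only [hg, norm_mul, norm_div, norm_pow, h, Complex.norm_natCast, one_pow]
      ring
    have hgsum : Summable g :=
      hbsum.of_norm_bounded (fun n => (hgnorm n).le)
    set r : ℕ → ℝ := fun k => 1 - 1 / (k + 1) with hrdef
    have hr0 : ∀ k, 0 ≤ r k := by
      intro k
      have : 1 / ((k:ℝ) + 1) ≤ 1 := by
        rw [div_le_one (by positivity)]; linarith [Nat.cast_nonneg (α := ℝ) k]
      simp only [hrdef]; linarith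
    have hr1 : ∀ k, r k < 1 := by
      intro k
      have : 0 < 1 / ((k:ℝ) + 1) := by positivity
      simp only [hrdef]; linarith
    have hrt : Tendsto r atTop (𝓝 1) := by
      have := tendsto_one_div_add_atTop_nhds_zero_nat.const_sub (1:ℝ)
      simpa [hrdef, one_div] using this
    have hrc : Tendsto (fun k => ((r k : ℝ) : ℂ)) atTop (𝓝 1) := by
      have := (Complex.continuous_ofReal.tendsto 1).comp hrt
      simpa [Function.comp_def] using this
    have hnorm_rl : ∀ k, ‖(r k : ℂ) * l‖ < 1 := by
      intro k
      rw [norm_mul, Complex.norm_real, h, mul_one, Real.norm_eq_abs,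
        abs_of_nonneg (hr0 k)]
      exact hr1 k
    set F : ℕ → ℕ → ℂ := fun k n => ((r k : ℂ) * l) ^ n / (n.factorial : ℂ) * ff z n with hF
    have htsum : ∀ k, ∑' n, F k n = (1 + (r k : ℂ) * l) ^ z := fun k =>
      (hasSum_ball z _ (hnorm_rl k)).tsum_eq
    have hdom : Tendsto (fun k => ∑' n, F k n) atTop (𝓝 (∑' n, g n)) := by
      apply tendsto_tsum_of_dominated_convergence hbsum
      · intro n
        have h1 : Tendsto (fun k => ((r k : ℂ) * l) ^ n / (n.factorial : ℂ) * ff z n)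
            atTop (𝓝 ((1 * l) ^ n / (n.factorial : ℂ) * ff z n)) :=
          (((hrc.mul_const l).pow n).div_const _).mul_const _
        simpa [hg] using h1
      · apply Eventually.of_forall
        intro k n
        have hx : ‖(r k : ℂ) * l‖ ≤ 1 := (hnorm_rl k).le
        have heq : ‖F k n‖ = ‖(r k : ℂ) * l‖ ^ n * ‖ff z n‖ / n.factorial := by
          simp only [hF, norm_mul, norm_div, norm_pow, Complex.norm_natCast]
          ring
        rw [heq]
        calc ‖(r k : ℂ) * l‖ ^ n * ‖ff z n‖ / n.factorial
            ≤ 1 * ‖ff z n‖ / n.factorial := by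
              gcongr
              exact pow_le_one₀ (norm_nonneg _) hx
          _ = ‖ff z n‖ / n.factorial := by ring
    have hcpow : Tendsto (fun k => (1 + (r k : ℂ) * l) ^ z) atTop (𝓝 ((1 + l) ^ z)) := by
      have hbase : Tendsto (fun k => 1 + (r k : ℂ) * l) atTop (𝓝 (1 + l)) := by
        have := (hrc.mul_const l).const_add (1:ℂ)
        simpa using this
      have hcont : ContinuousAt (fun x : ℂ => x ^ z) (1 + l) :=
        continuousAt_cpow_const (Complex.mem_slitPlane_iff.mpr (Or.inl hre))
      exact hcont.tendsto.comp hbase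
    have hdom' : Tendsto (fun k => (1 + (r k : ℂ) * l) ^ z) atTop (𝓝 (∑' n, g n)) := by
      rw [show (fun k => (1 + (r k : ℂ) * l) ^ z) = fun k => ∑' n, F k n from
        (funext htsum).symm]
      exact hdom
    have hfinal : ∑' n, g n = (1 + l) ^ z := tendsto_nhds_unique hdom' hcpow
    exact hfinal ▸ hgsum.hasSum

theorem stmt_14 (l : ℂ) (hl : l ≠ 0) (a : ℕ → ℂ) :
    ((∀ n : ℕ, ((n : ℂ) + 1) * a (n + 1) = l * a n) ↔
      (∀ n : ℕ, a n = a 0 * l ^ n / (n.factorial : ℂ))) ∧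
    (‖l‖ ≤ 1 → l ≠ -1 → ∀ z : ℂ, 0 < z.re →
      HasSum (fun n : ℕ => l ^ n / (n.factorial : ℂ) * ff z n) ((1 + l) ^ z)) := by
  constructor
  · constructor
    · intro h n
      induction n with
      | zero => simp
      | succ n ih =>
        have hne : ((n : ℂ) + 1) ≠ 0 := Nat.cast_add_one_ne_zero n
        have hfac : ((n + 1).factorial : ℂ) = ((n : ℂ) + 1) * (n.factorial : ℂ) := by
          rw [Nat.factorial_succ]; push_cast; ring
        have h1 := h n
        rw [ih] at h1
        have hfne : (n.factorial : ℂ) ≠ 0 := Nat.cast_ne_zero.mpr n.factorial_ne_zero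
        have h2 : a (n + 1) = l * (a 0 * l ^ n / (n.factorial : ℂ)) / ((n : ℂ) + 1) :=
          (eq_div_iff hne).mpr (by rw [← h1]; ring)
        rw [h2, hfac, pow_succ, div_mul_eq_div_div_swap]
        ring
    · intro h n
      rw [h n, h (n + 1)]
      have hfne : (n.factorial : ℂ) ≠ 0 := Nat.cast_ne_zero.mpr n.factorial_ne_zero
      have hne : ((n : ℂ) + 1) ≠ 0 := Nat.cast_add_one_ne_zero n
      have hfac : ((n + 1).factorial : ℂ) = ((n : ℂ) + 1) * (n.factorial : ℂ) := by
        rw [Nat.factorial_succ]; push_cast; ring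
      rw [hfac]
      field_simp
      ring
  · intro h1 h2 z hz
    exact hasSum_main l h1 h2 z hz
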